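/- Let D = (P_1, …, P_n) with P_i = (α_i, β_i) ∈ ℕ² and s_1 ≤ s_2 ≤ … ≤ s_n, and let d = Σ_i s_i. Then there exists an n×n matrix S with entries in R such that: (i) the (i,j) entry of S is 0 whenever i ≤ s_j; (ii) whenever i > s_j, the (i,j) entry of S is a product ∏_{ℓ=1}^{s_j} a_ℓ^{(i,j)}, where each factor a_ℓ^{(i,j)} is either x_i − x_ℓ or y_i − y_ℓ; and (iii) det(S) − Δ(D) ∈ I_{<d}. -/

import Mathlib

open MvPolynomial

noncomputable section

abbrev R (n : ℕ) := MvPolynomial (Fin n ⊕ Fin n) ℂ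

/-- The variable `x_i`. -/
def xv {n : ℕ} (i : Fin n) : R n := X (Sum.inl i)

/-- The variable `y_i`. -/
def yv {n : ℕ} (i : Fin n) : R n := X (Sum.inr i)

/-- The radical ideal defining the diagonal locus of `(ℂ²)^n`. -/
def diagIdeal (n : ℕ) : Ideal (R n) :=
  ⨅ (i : Fin n) (j : Fin n) (_ : i < j), Ideal.span {xv i - xv j, yv i - yv j}

/-- `Δ(D)`: the determinant of the matrix with `(i,j)` entry `x_i^{α_j} y_i^{β_j}`. -/
def Delta (n : ℕ) (D : Fin n → ℕ × ℕ) : R n :=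
  Matrix.det (Matrix.of fun i j : Fin n => xv i ^ (D j).1 * yv i ^ (D j).2)

/-- `s_i = α_i + β_i`. -/
def sdeg {n : ℕ} (D : Fin n → ℕ × ℕ) (i : Fin n) : ℕ := (D i).1 + (D i).2

/-- `I_{<d}`: the ideal generated by homogeneous elements of `I` of degree `< d`. -/
def Ilt (n d : ℕ) : Ideal (R n) :=
  Ideal.span {f : R n | f ∈ diagIdeal n ∧ ∃ e, e < d ∧ f.IsHomogeneous e}

/-- The bigrading weight. -/
def bw (n : ℕ) : Fin n ⊕ Fin n → ℕ × ℕ := Sum.elim (fun _ => (1, 0)) (fun _ => (0, 1))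

/-- Bihomogeneous component of bidegree `(d₁, d₂)`. -/
def biComp (n d1 d2 : ℕ) : Submodule ℂ (R n) :=
  weightedHomogeneousSubmodule ℂ (bw n) (d1, d2)

/-- Bihomogeneous elements of `I` of bidegree `(d₁,d₂)`. -/
def Vsub (n d1 d2 : ℕ) : Submodule ℂ (R n) :=
  (diagIdeal n).restrictScalars ℂ ⊓ biComp n d1 d2

/-- The ideal `(x,y)·I`. -/
def xyIdeal (n : ℕ) : Ideal (R n) :=
  Ideal.span (Set.range fun v : Fin n ⊕ Fin n => (X v : R n)) * diagIdeal n

/-- Bihomogeneous elements of `(x,y)I` of bidegree `(d₁,d₂)`. -/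
def Nsub (n d1 d2 : ℕ) : Submodule ℂ (R n) :=
  (xyIdeal n).restrictScalars ℂ ⊓ biComp n d1 d2

/-- The bigraded piece `M_{d₁,d₂}` of `M = I/(x,y)I`, realized as the image of
`Vsub` in the quotient by `Nsub`. -/
def Mgr (n d1 d2 : ℕ) : Submodule ℂ (R n ⧸ Nsub n d1 d2) :=
  (Vsub n d1 d2).map (Nsub n d1 d2).mkQ

/-- Minimal staircase form: pairwise distinct points, weakly increasing degrees,
and `s_i ∈ {i-1, i-2}` (1-indexed), i.e. `s_i ∈ {i, i-1}` 0-indexed. -/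
def IsMinStaircase {n : ℕ} (D : Fin n → ℕ × ℕ) : Prop :=
  Function.Injective D ∧ Monotone (sdeg D) ∧
    ∀ i : Fin n, sdeg D i = (i : ℕ) ∨ sdeg D i + 1 = (i : ℕ)

/-- The leader (block head) of position `j`: the largest `t ≤ j` with `s_t = t`. -/
def leader {n : ℕ} (D : Fin n → ℕ × ℕ) (j : Fin n) : ℕ :=
  (Finset.univ.filter fun t : Fin n => (t : ℕ) ≤ (j : ℕ) ∧ sdeg D t = (t : ℕ)).sup
    fun t => (t : ℕ)

/-- The partition type of `D`: the multiset of positive per-block deficits. -/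
def ptype {n : ℕ} (D : Fin n → ℕ × ℕ) : Multiset ℕ :=
  Multiset.filter (fun x => 0 < x)
    (((Finset.univ.filter fun t : Fin n => sdeg D t = (t : ℕ)).val).map
      fun t => ∑ j : Fin n, if leader D j = (t : ℕ) then (j : ℕ) - sdeg D j else 0)

/-- `μ ≤_P ν`: the parts of `μ` can be grouped so that the group sums are the parts of `ν`. -/
def subPart (μ ν : Multiset ℕ) : Prop :=
  ∃ G : Multiset (Multiset ℕ), G.sum = μ ∧ G.map Multiset.sum = ν

/-- `μ <_P ν`. -/
def subPartLt (μ ν : Multiset ℕ) : Prop := subPart μ ν ∧ μ ≠ ν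

/-- Auxiliary: a generalized point determinant. -/
def DeltaE (n : ℕ) (E : Fin n → ℕ × ℕ) : R n :=
  Matrix.det (Matrix.of fun i j : Fin n => xv i ^ (E j).1 * yv i ^ (E j).2)

lemma DeltaE_eq_Delta (n : ℕ) (D : Fin n → ℕ × ℕ) : DeltaE n D = Delta n D := rfl

lemma deltaE_mem_diagIdeal (n : ℕ) (E : Fin n → ℕ × ℕ) : DeltaE n E ∈ diagIdeal n := by
  rw [diagIdeal]
  simp only [Ideal.mem_iInf]
  intro i j hij
  set J := Ideal.span ({xv i - xv j, yv i - yv j} : Set (R n)) with hJ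
  have hx : Ideal.Quotient.mk J (xv i) = Ideal.Quotient.mk J (xv j) := by
    rw [Ideal.Quotient.mk_eq_mk_iff_sub_mem]
    exact Ideal.subset_span (by simp)
  have hy : Ideal.Quotient.mk J (yv i) = Ideal.Quotient.mk J (yv j) := by
    rw [Ideal.Quotient.mk_eq_mk_iff_sub_mem]
    exact Ideal.subset_span (by simp)
  rw [← Ideal.Quotient.eq_zero_iff_mem, DeltaE, RingHom.map_det]
  apply Matrix.det_zero_of_row_eq hij.ne
  funext k
  show Ideal.Quotient.mk J (xv i ^ (E k).1 * yv i ^ (E k).2)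
      = Ideal.Quotient.mk J (xv j ^ (E k).1 * yv j ^ (E k).2)
  rw [map_mul, map_mul, map_pow, map_pow, hx, hy]
  simp [map_pow]

lemma deltaE_isHomogeneous (n : ℕ) (E : Fin n → ℕ × ℕ) :
    (DeltaE n E).IsHomogeneous (∑ j, ((E j).1 + (E j).2)) := by
  rw [DeltaE, Matrix.det_apply]
  apply MvPolynomial.IsHomogeneous.sum
  intro σ _
  have hp : (∏ i, (Matrix.of fun i j : Fin n => xv i ^ (E j).1 * yv i ^ (E j).2) (σ i) i).IsHomogeneous
      (∑ j, ((E j).1 + (E j).2)) := by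
    apply MvPolynomial.IsHomogeneous.prod
    intro k _
    simp only [Matrix.of_apply]
    have h1 : (xv (σ k) ^ (E k).1 : R n).IsHomogeneous (E k).1 := by
      simpa [xv] using (MvPolynomial.isHomogeneous_X ℂ (Sum.inl (σ k) : Fin n ⊕ Fin n)).pow (E k).1
    have h2 : (yv (σ k) ^ (E k).2 : R n).IsHomogeneous (E k).2 := by
      simpa [yv] using (MvPolynomial.isHomogeneous_X ℂ (Sum.inr (σ k) : Fin n ⊕ Fin n)).pow (E k).2
    exact h1.mul h2
  rcases Int.units_eq_one_or (Equiv.Perm.sign σ) with h | h <;> rw [h]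
  · simpa using hp
  · simpa using hp.neg

/-- existence of a staircase form. Positions are 0-indexed: the
paper's condition "`S i j = 0` whenever `i ≤ s_j`" (1-indexed rows) becomes
`(i : ℕ) < s_j`, and the factors `x_i - x_ℓ`, `y_i - y_ℓ` for `1 ≤ ℓ ≤ s_j`
are indexed by `ℓ : Fin n` with `(ℓ : ℕ) < s_j`. -/
theorem exists_staircase_form (n : ℕ) (D : Fin n → ℕ × ℕ)
    (hmono : Monotone (sdeg D)) :
    ∃ S : Matrix (Fin n) (Fin n) (R n),
      (∀ i j : Fin n, (i : ℕ) < sdeg D j → S i j = 0) ∧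
      (∀ i j : Fin n, sdeg D j ≤ (i : ℕ) → ∃ c : Fin n → Bool,
        S i j = ∏ l : Fin n, if (l : ℕ) < sdeg D j then
          (if c l then xv i - xv l else yv i - yv l) else 1) ∧
      S.det - Delta n D ∈ Ilt n (∑ i, sdeg D i) := by
  classical
  rcases Nat.eq_zero_or_pos n with hn | hn
  · subst hn
    refine ⟨0, fun i => i.elim0, fun i => i.elim0, ?_⟩
    have h1 : (0 : Matrix (Fin 0) (Fin 0) (R 0)).det = 1 := Matrix.det_fin_zero
    have h2 : Delta 0 D = 1 := Matrix.det_fin_zero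
    simp [h1, h2]
  -- `n > 0` : main construction
  let m : ℕ → Fin n := fun l => ⟨l % n, Nat.mod_lt l hn⟩
  have hm : ∀ l : Fin n, m (l : ℕ) = l := fun l => Fin.ext (Nat.mod_eq_of_lt l.isLt)
  let fac : Fin n → ℕ → Fin n → R n := fun j l i =>
    if l < (D j).1 then xv i - xv (m l) else yv i - yv (m l)
  let S : Matrix (Fin n) (Fin n) (R n) :=
    Matrix.of fun i j => ∏ l ∈ Finset.range (sdeg D j), fac j l i
  refine ⟨S, ?_, ?_, ?_⟩
  · -- vanishing above the staircase
    intro i j hij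
    apply Finset.prod_eq_zero (Finset.mem_range.mpr hij)
    simp only [fac, hm i]
    split <;> simp
  · -- product form below the staircase
    intro i j hij
    refine ⟨fun l => decide ((l : ℕ) < (D j).1), ?_⟩
    have hs : sdeg D j ≤ n := le_trans hij (le_of_lt i.isLt)
    have key : ∀ l : Fin n,
        (if (l : ℕ) < sdeg D j then
          (if decide ((l : ℕ) < (D j).1) then xv i - xv l else yv i - yv l) else 1)
          = (if (l : ℕ) < sdeg D j then fac j (l : ℕ) i else 1) := by
      intro l
      simp only [fac, hm l, decide_eq_true_eq]
    rw [Finset.prod_congr rfl (fun l _ => key l),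
      Fin.prod_univ_eq_prod_range (fun l => if l < sdeg D j then fac j l i else 1) n]
    rw [show S i j = ∏ l ∈ Finset.range (sdeg D j), fac j l i from rfl]
    rw [← Finset.prod_subset (Finset.range_subset_range.mpr hs)
      (fun x _ hx => if_neg (fun hlt => hx (Finset.mem_range.mpr hlt)))]
    exact Finset.prod_congr rfl fun x hx => (if_pos (Finset.mem_range.mp hx)).symm
  · -- the determinant congruence
    set d := ∑ i, sdeg D i with hd
    let v : Fin n → ℕ → R n := fun j l => if l < (D j).1 then xv (m l) else yv (m l)
    let w : ℕ → ℕ → Fin n → R n := fun a b i => xv i ^ a * yv i ^ b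
    let a : Fin n → Finset ℕ → ℕ := fun j T => (T.filter (fun l => l < (D j).1)).card
    let b : Fin n → Finset ℕ → ℕ := fun j T => (T.filter (fun l => ¬ l < (D j).1)).card
    let c : Fin n → Finset ℕ → R n := fun j T => ∏ l ∈ Finset.range (sdeg D j) \ T, (-(v j l))
    have hcol : ∀ j, (fun i => S i j)
        = ∑ T ∈ (Finset.range (sdeg D j)).powerset, c j T • w (a j T) (b j T) := by
      intro j
      funext i
      have hfac : ∀ l, fac j l i = (if l < (D j).1 then xv i else yv i) + (-(v j l)) := by
        intro l
        simp only [fac, v]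
        split <;> ring
      show S i j = _
      have h1 : S i j = ∏ l ∈ Finset.range (sdeg D j),
          ((if l < (D j).1 then xv i else yv i) + (-(v j l))) := by
        rw [show S i j = ∏ l ∈ Finset.range (sdeg D j), fac j l i from rfl]
        exact Finset.prod_congr rfl fun l _ => hfac l
      rw [h1, Finset.prod_add, Finset.sum_apply]
      refine Finset.sum_congr rfl fun T _ => ?_
      rw [Finset.prod_ite _ _, Finset.prod_const, Finset.prod_const]
      simp only [Pi.smul_apply, smul_eq_mul, w, a, b, c]
      ring
    -- expand the determinant by multilinearity
    let A : Fin n → Finset (Finset ℕ) := fun j => (Finset.range (sdeg D j)).powerset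
    let f : MultilinearMap (R n) (fun _ : Fin n => (Fin n → R n)) (R n) :=
      (Matrix.detRowAlternating (n := Fin n) (R := R n)).toMultilinearMap
    have hST : S.det = f (fun j => (fun i => S i j)) := by
      rw [← Matrix.det_transpose]
      rfl
    have expand : S.det = ∑ r ∈ Fintype.piFinset A,
        (∏ j, c j (r j)) • DeltaE n (fun j => (a j (r j), b j (r j))) := by
      rw [hST,
        show (fun j => (fun i => S i j)) = (fun j => ∑ T ∈ A j, c j T • w (a j T) (b j T))
          from funext hcol,
        f.map_sum_finset (fun j T => c j T • w (a j T) (b j T)) A]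
      refine Finset.sum_congr rfl fun r _ => ?_
      rw [f.map_smul_univ]
      congr 1
      rw [DeltaE, ← Matrix.det_transpose]
      rfl
    -- identify the leading term
    let r₀ : Fin n → Finset ℕ := fun j => Finset.range (sdeg D j)
    have hr₀ : r₀ ∈ Fintype.piFinset A := by
      simp [r₀, A, Fintype.mem_piFinset]
    have hcard : ∀ j (T : Finset ℕ), a j T + b j T = T.card := fun j T =>
      Finset.card_filter_add_card_filter_not _
    have htop : (∏ j, c j (r₀ j)) • DeltaE n (fun j => (a j (r₀ j), b j (r₀ j))) = Delta n D := by
      have hc1 : ∀ j, c j (r₀ j) = 1 := by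
        intro j
        simp [c, r₀, Finset.sdiff_self]
      have hE : (fun j => (a j (r₀ j), b j (r₀ j))) = D := by
        funext j
        have hfil : (r₀ j).filter (fun l => l < (D j).1) = Finset.range (D j).1 := by
          ext l
          simp only [r₀, Finset.mem_filter, Finset.mem_range, sdeg]
          omega
        have ha : a j (r₀ j) = (D j).1 := by
          simp only [a, hfil, Finset.card_range]
        have hab := hcard j (r₀ j)
        have hcr : (r₀ j).card = (D j).1 + (D j).2 := by
          simp [r₀, sdeg]
        have hb : b j (r₀ j) = (D j).2 := by omega
        simp [ha, hb]
      rw [hE]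
      simp [hc1, DeltaE_eq_Delta]
    have split : S.det = (∑ r ∈ (Fintype.piFinset A).erase r₀,
        (∏ j, c j (r j)) • DeltaE n (fun j => (a j (r j), b j (r j)))) + Delta n D := by
      rw [expand, ← Finset.sum_erase_add _ _ hr₀]
      congr 1
    rw [split, add_sub_cancel_right]
    -- every remaining term lies in `Ilt n d`
    refine Ideal.sum_mem _ fun r hr => ?_
    rw [Finset.mem_erase] at hr
    obtain ⟨hrne, hrmem⟩ := hr
    rw [Fintype.mem_piFinset] at hrmem
    have hsub : ∀ j, r j ⊆ Finset.range (sdeg D j) := fun j =>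
      Finset.mem_powerset.mp (hrmem j)
    have hex : ∃ j, r j ≠ Finset.range (sdeg D j) := by
      by_contra h
      push_neg at h
      exact hrne (funext h)
    obtain ⟨j₀, hj₀⟩ := hex
    have hdeg : (∑ j, ((a j (r j)) + (b j (r j)))) < d := by
      have heq : ∀ j, a j (r j) + b j (r j) = (r j).card := fun j => hcard j (r j)
      rw [hd]
      calc (∑ j, ((a j (r j)) + (b j (r j)))) = ∑ j, (r j).card :=
            Finset.sum_congr rfl fun j _ => heq j
        _ < ∑ j, sdeg D j := by
            apply Finset.sum_lt_sum
            · intro j _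
              simpa using Finset.card_le_card (hsub j)
            · exact ⟨j₀, Finset.mem_univ _, by
                simpa using Finset.card_lt_card ((hsub j₀).ssubset_of_ne hj₀)⟩
    have hgen : DeltaE n (fun j => (a j (r j), b j (r j))) ∈ Ilt n d := by
      apply Ideal.subset_span
      exact ⟨deltaE_mem_diagIdeal n _, _, hdeg, deltaE_isHomogeneous n _⟩
    rw [smul_eq_mul]
    exact Ideal.mul_mem_left _ _ hgen

end
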